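/- arXiv:2412.04941 — 2 statements merged into one kernel-verified Lean document; each statement's English description precedes it below -/
import Mathlib

section
/- Let W = span{e₁, e₂, e₃, e₄} ⊆ ℝ⁶ and ω̃ = dx¹∧dx²∧dx³ + dx¹∧dx⁴∧dx⁵ + dx²∧dx⁴∧dx⁶ an alternating 3-form on ℝ⁶. Then W is 2-coisotropic: W^{⊥,2} ⊆ W. -/
/-- The wedge `dx^i ∧ dx^j ∧ dx^k` on `ℝ^n`, as the alternating 3-form sending
`(v₁, v₂, v₃)` to `det (vₐ(x_b))` with `(x₁,x₂,x₃) = (i,j,k)`. -/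
noncomputable def form3 (n : ℕ) (i j k : Fin n) :
    (Fin n → ℝ) [⋀^Fin 3]→ₗ[ℝ] ℝ :=
  (Matrix.detRowAlternating (R := ℝ) (n := Fin 3)).compLinearMap
    (LinearMap.funLeft ℝ ℝ ![i, j, k])

lemma form3_apply (n : ℕ) (i j k : Fin n) (m : Fin 3 → Fin n → ℝ) :
    form3 n i j k m = Matrix.det (Matrix.of fun a b => m a (![i, j, k] b)) := rfl

/-- `W = span{e₁,e₂,e₃,e₄} ⊆ ℝ⁶` is 2-coisotropic for
`ω̃ = dx¹∧dx²∧dx³ + dx¹∧dx⁴∧dx⁵ + dx²∧dx⁴∧dx⁶`: `W^{⊥,2} ⊆ W`. -/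
theorem coisotropic_R6 :
    ∀ v : Fin 6 → ℝ,
      (∀ w₁ w₂ : Fin 6 → ℝ,
        w₁ ∈ Submodule.span ℝ {Pi.single (0 : Fin 6) (1 : ℝ),
          Pi.single 1 1, Pi.single 2 1, Pi.single 3 1} →
        w₂ ∈ Submodule.span ℝ {Pi.single (0 : Fin 6) (1 : ℝ),
          Pi.single 1 1, Pi.single 2 1, Pi.single 3 1} →
        (form3 6 0 1 2 + form3 6 0 3 4 + form3 6 1 3 5) ![v, w₁, w₂] = 0) →
      v ∈ Submodule.span ℝ {Pi.single (0 : Fin 6) (1 : ℝ),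
        Pi.single 1 1, Pi.single 2 1, Pi.single 3 1} := by
  intro v h
  have m0 : Pi.single (0 : Fin 6) (1 : ℝ) ∈ Submodule.span ℝ ({Pi.single (0 : Fin 6) (1 : ℝ),
      Pi.single (1:Fin 6) (1:ℝ), Pi.single (2:Fin 6) (1:ℝ), Pi.single (3:Fin 6) (1:ℝ)} : Set (Fin 6 → ℝ)) := Submodule.subset_span (Set.mem_insert _ _)
  have m1 : Pi.single (1 : Fin 6) (1 : ℝ) ∈ Submodule.span ℝ ({Pi.single (0 : Fin 6) (1 : ℝ),
      Pi.single (1:Fin 6) (1:ℝ), Pi.single (2:Fin 6) (1:ℝ), Pi.single (3:Fin 6) (1:ℝ)} : Set (Fin 6 → ℝ)) := Submodule.subset_span (Set.mem_insert_of_mem _ (Set.mem_insert _ _))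
  have m2 : Pi.single (2 : Fin 6) (1 : ℝ) ∈ Submodule.span ℝ ({Pi.single (0 : Fin 6) (1 : ℝ),
      Pi.single (1:Fin 6) (1:ℝ), Pi.single (2:Fin 6) (1:ℝ), Pi.single (3:Fin 6) (1:ℝ)} : Set (Fin 6 → ℝ)) := Submodule.subset_span (Set.mem_insert_of_mem _ (Set.mem_insert_of_mem _ (Set.mem_insert _ _)))
  have m3 : Pi.single (3 : Fin 6) (1 : ℝ) ∈ Submodule.span ℝ ({Pi.single (0 : Fin 6) (1 : ℝ),
      Pi.single (1:Fin 6) (1:ℝ), Pi.single (2:Fin 6) (1:ℝ), Pi.single (3:Fin 6) (1:ℝ)} : Set (Fin 6 → ℝ)) := Submodule.subset_span (Set.mem_insert_of_mem _ (Set.mem_insert_of_mem _ (Set.mem_insert_of_mem _ rfl)))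
  have h4 : v 4 = 0 := by
    have := h _ _ m0 m3
    simpa [form3_apply, Matrix.det_fin_three, Pi.single_apply, Matrix.vecHead,
      Matrix.vecTail] using this
  have h5 : v 5 = 0 := by
    have := h _ _ m1 m3
    simpa [form3_apply, Matrix.det_fin_three, Pi.single_apply, Matrix.vecHead,
      Matrix.vecTail] using this
  have hv : v = v 0 • (Pi.single 0 1 : Fin 6 → ℝ) + v 1 • (Pi.single 1 1 : Fin 6 → ℝ)
      + v 2 • (Pi.single 2 1 : Fin 6 → ℝ) + v 3 • (Pi.single 3 1 : Fin 6 → ℝ) := by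
    funext i
    fin_cases i <;> simp [h4, h5, Pi.single_apply]
  rw [hv]
  exact Submodule.add_mem _ (Submodule.add_mem _ (Submodule.add_mem _
    (Submodule.smul_mem _ _ m0) (Submodule.smul_mem _ _ m1))
    (Submodule.smul_mem _ _ m2)) (Submodule.smul_mem _ _ m3)
end

section
/- The kernel of the pre-multisymplectic 3-form ω = dρˣ ∧ du ∧ dt − ρˣ dρˣ ∧ dx ∧ dt at a point of ℝ⁵ with coordinates (x, t, u, ρˣ, ρᵗ) is spanned by the two vectors ∂/∂x + ρˣ ∂/∂u and ∂/∂ρᵗ. -/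
lemma form3_eval (n : ℕ) (i j k : Fin n) (v w₁ w₂ : Fin n → ℝ) :
    form3 n i j k ![v, w₁, w₂] =
      v i * (w₁ j * w₂ k - w₁ k * w₂ j)
      - v j * (w₁ i * w₂ k - w₁ k * w₂ i)
      + v k * (w₁ i * w₂ j - w₁ j * w₂ i) := by
  show Matrix.det (Matrix.of fun a b => (LinearMap.funLeft ℝ ℝ ![i, j, k]) (![v, w₁, w₂] a) b) = _
  rw [Matrix.det_fin_three]
  simp [LinearMap.funLeft]
  ring

/-- With coordinates `(x, t, u, ρˣ, ρᵗ)` indexed by `0,…,4` and `ρˣ = c` at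
the chosen point, the kernel of `ω = dρˣ∧du∧dt − c·dρˣ∧dx∧dt` on the tangent
space `ℝ⁵` is exactly `span{∂x + c·∂u, ∂ρᵗ}`. -/
theorem kernel_pre3plectic (c : ℝ) :
    ∀ v : Fin 5 → ℝ,
      (∀ w₁ w₂ : Fin 5 → ℝ,
        (form3 5 3 2 1 - c • form3 5 3 0 1) ![v, w₁, w₂] = 0) ↔
      v ∈ Submodule.span ℝ
        ({(Pi.single 0 1 : Fin 5 → ℝ) + c • (Pi.single 2 1 : Fin 5 → ℝ),
          (Pi.single 4 1 : Fin 5 → ℝ)} : Set (Fin 5 → ℝ)) := by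
  intro v
  have key : ∀ w₁ w₂ : Fin 5 → ℝ,
      (form3 5 3 2 1 - c • form3 5 3 0 1) ![v, w₁, w₂] =
        (v 3 * (w₁ 2 * w₂ 1 - w₁ 1 * w₂ 2)
          - v 2 * (w₁ 3 * w₂ 1 - w₁ 1 * w₂ 3)
          + v 1 * (w₁ 3 * w₂ 2 - w₁ 2 * w₂ 3))
        - c * (v 3 * (w₁ 0 * w₂ 1 - w₁ 1 * w₂ 0)
          - v 0 * (w₁ 3 * w₂ 1 - w₁ 1 * w₂ 3)
          + v 1 * (w₁ 3 * w₂ 0 - w₁ 0 * w₂ 3)) := by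
    intro w₁ w₂
    rw [AlternatingMap.sub_apply, AlternatingMap.smul_apply, form3_eval, form3_eval]
    simp
  rw [Submodule.mem_span_pair]
  constructor
  · intro h
    have h3 : v 3 = 0 := by
      have := h (Pi.single 2 1) (Pi.single 1 1)
      rw [key] at this
      simpa [Pi.single_apply] using this
    have h1 : v 1 = 0 := by
      have := h (Pi.single 3 1) (Pi.single 2 1)
      rw [key] at this
      simpa [Pi.single_apply] using this
    have h2 : v 2 = c * v 0 := by
      have := h (Pi.single 3 1) (Pi.single 1 1)
      rw [key] at this
      simp [Pi.single_apply, h1, h3] at this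
      linarith
    refine ⟨v 0, v 4, ?_⟩
    funext i
    fin_cases i <;> simp [Pi.single_apply, h1, h2, h3, mul_comm]
  · rintro ⟨a, b, rfl⟩ w₁ w₂
    rw [key]
    simp [Pi.single_apply]
    ring
end
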